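/- Let k be a field of characteristic 2. Then the subring R = k[x^4, x^3 y, x y^3, y^4] of the polynomial ring k[x,y] satisfies k[x^4, y^4] ⊆ R ⊆ k[x,y], and both inclusions are purely inseparable extensions; hence R has the same perfect closure as k[x,y] and is F-coherent. -/

import Mathlib

/-- A commutative ring is *coherent* if every finitely generated ideal is
finitely presented (as a module). -/
def IsCoherentRing (R : Type*) [CommRing R] : Prop :=
  ∀ I : Ideal R, I.FG → Module.FinitePresentation R I

instance subalgebraCharP {k A : Type*} [CommSemiring k] [CommSemiring A] [Algebra k A]
    (p : ℕ) [CharP A p] (S : Subalgebra k A) : CharP S p :=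
  CharP.subsemiring A p S.toSubsemiring

open MvPolynomial

set_option linter.unusedSectionVars false



section Dot
variable {A : Type*} [CommRing A]

/-- dot product with `g` as a linear map -/
def dotL {m : ℕ} (g : Fin m → A) : (Fin m → A) →ₗ[A] A where
  toFun c := ∑ i, c i * g i
  map_add' a b := by simp [add_mul, Finset.sum_add_distrib]
  map_smul' r a := by simp [Finset.mul_sum, mul_assoc]

lemma dotL_apply {m : ℕ} (g : Fin m → A) (c : Fin m → A) : dotL g c = ∑ i, c i * g i := rfl

lemma range_dotL {m : ℕ} (g : Fin m → A) :
    LinearMap.range (dotL g) = (Ideal.span (Set.range g) : Submodule A A) := by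
  ext x
  simp only [LinearMap.mem_range, dotL_apply]
  rw [show (Ideal.span (Set.range g) : Submodule A A) = Submodule.span A (Set.range g) from rfl]
  rw [Submodule.mem_span_range_iff_exists_fun]
  simp [smul_eq_mul, eq_comm]

lemma isCoherent_aux (H : ∀ (m : ℕ) (g : Fin m → A), (LinearMap.ker (dotL g)).FG) :
    IsCoherentRing A := by
  intro I hI
  obtain ⟨m, g, hg⟩ := Submodule.fg_iff_exists_fin_generating_family.mp hI
  have hg' : ∀ c : Fin m → A, dotL g c ∈ I := by
    intro c
    rw [← hg]
    have : dotL g c ∈ LinearMap.range (dotL g) := ⟨c, rfl⟩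
    rwa [range_dotL] at this
  let π : (Fin m → A) →ₗ[A] I := (dotL g).codRestrict (I : Submodule A A) hg'
  have hsurj : Function.Surjective π := by
    rintro ⟨x, hx⟩
    rw [← hg] at hx
    have : x ∈ LinearMap.range (dotL g) := by rwa [range_dotL]
    obtain ⟨c, hc⟩ := this
    exact ⟨c, Subtype.ext hc⟩
  refine Module.finitePresentation_of_free_of_surjective π hsurj ?_
  rw [LinearMap.ker_codRestrict]
  exact H m g

lemma ker_dotL_fg_of_coherent (hA : IsCoherentRing A) {m : ℕ} (g : Fin m → A) :
    (LinearMap.ker (dotL g)).FG := by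
  have hfp := hA (Ideal.span (Set.range g)) (Submodule.fg_span (Set.finite_range g))
  have hg' : ∀ c : Fin m → A, dotL g c ∈ Ideal.span (Set.range g) := by
    intro c
    have : dotL g c ∈ LinearMap.range (dotL g) := ⟨c, rfl⟩
    rwa [range_dotL] at this
  let π : (Fin m → A) →ₗ[A] (Ideal.span (Set.range g)) :=
    (dotL g).codRestrict (Ideal.span (Set.range g) : Submodule A A) hg'
  have hsurj : Function.Surjective π := by
    rintro ⟨x, hx⟩
    have : x ∈ LinearMap.range (dotL g) := by rwa [range_dotL]
    obtain ⟨c, hc⟩ := this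
    exact ⟨c, Subtype.ext hc⟩
  have := Module.FinitePresentation.fg_ker π hsurj
  rwa [LinearMap.ker_codRestrict] at this

end Dot

section Transfer
variable {A B : Type*} [CommRing A] [CommRing B]

lemma isCoherentRing_of_ringEquiv (e : A ≃+* B) (hB : IsCoherentRing B) : IsCoherentRing A := by
  apply isCoherent_aux
  intro m g
  obtain ⟨r, u, hu⟩ := Submodule.fg_iff_exists_fin_generating_family.mp
    (ker_dotL_fg_of_coherent hB (fun i => e (g i)))
  have key : LinearMap.ker (dotL g)
      = Submodule.span A (Set.range (fun s i => e.symm (u s i))) := by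
    apply le_antisymm
    · intro c hc
      rw [LinearMap.mem_ker, dotL_apply] at hc
      have hcB : (fun i => e (c i)) ∈ LinearMap.ker (dotL (fun i => e (g i))) := by
        rw [LinearMap.mem_ker, dotL_apply]
        rw [show ∀ z : Fin m → B, (∑ i, z i) = ∑ i, z i from fun _ => rfl]
        calc (∑ i, e (c i) * e (g i)) = e (∑ i, c i * g i) := by rw [map_sum]; simp
        _ = 0 := by rw [hc, map_zero]
      rw [← hu, Submodule.mem_span_range_iff_exists_fun] at hcB
      obtain ⟨d, hd⟩ := hcB
      rw [Submodule.mem_span_range_iff_exists_fun]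
      refine ⟨fun s => e.symm (d s), funext fun i => e.injective ?_⟩
      have := congrFun hd i
      simp only [Finset.sum_apply, Pi.smul_apply, smul_eq_mul] at this ⊢
      rw [map_sum]
      simpa using this
    · rw [Submodule.span_le]
      rintro _ ⟨s, rfl⟩
      rw [SetLike.mem_coe, LinearMap.mem_ker, dotL_apply]
      apply e.injective
      rw [map_sum, map_zero]
      have hus : u s ∈ LinearMap.ker (dotL (fun i => e (g i))) := by
        rw [← hu]; exact Submodule.subset_span ⟨s, rfl⟩
      rw [LinearMap.mem_ker, dotL_apply] at hus
      simpa using hus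
  rw [key]
  exact Submodule.fg_span (Set.finite_range _)

end Transfer

universe u

/-- `T` is free over the image of the `q = p^l` power Frobenius, in concrete terms. -/
def HasFrobBasis (T : Type u) [CommRing T] (q : ℕ) : Prop :=
  ∃ (J : Type u) (w : J → T),
    (∀ t : T, ∃ (s : Finset J) (a : J → T), t = ∑ j ∈ s, a j ^ q * w j) ∧
    (∀ (s : Finset J) (a : J → T), ∑ j ∈ s, a j ^ q * w j = 0 → ∀ j ∈ s, a j = 0)

lemma sum_pow_charpow {T : Type*} [CommRing T] (p l : ℕ) [Fact p.Prime] [CharP T p]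
    {ι : Type*} (t : Finset ι) (f : ι → T) :
    (∑ i ∈ t, f i) ^ p ^ l = ∑ i ∈ t, f i ^ p ^ l := by
  simpa only [iterateFrobenius_def] using map_sum (iterateFrobenius T p l) f t

lemma syzygy {T : Type u} [CommRing T] (p l : ℕ) [Fact p.Prime] [CharP T p]
    (hB : HasFrobBasis T (p ^ l)) {m r : ℕ} (b : Fin m → T) (v : Fin r → Fin m → T)
    (hker : ∀ c : Fin m → T, (∑ i, b i * c i) = 0 →
      ∃ d : Fin r → T, ∀ i, (∑ s, d s * v s i) = c i)
    (c : Fin m → T) (hc : ∑ i, b i ^ p ^ l * c i = 0) :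
    ∃ d : Fin r → T, ∀ i, (∑ s, d s * (v s i) ^ p ^ l) = c i := by
  classical
  obtain ⟨J, w, hspan, hindep⟩ := hB
  have hq0 : p ^ l ≠ 0 := pow_ne_zero _ (Nat.Prime.ne_zero Fact.out)
  choose sc ac hac using fun i => hspan (c i)
  set s : Finset J := Finset.univ.biUnion sc with hs
  set A : Fin m → J → T := fun i j => if j ∈ sc i then ac i j else 0 with hA_def
  have hA : ∀ i, c i = ∑ j ∈ s, A i j ^ p ^ l * w j := by
    intro i
    have hsub : sc i ⊆ s := fun j hj => Finset.mem_biUnion.2 ⟨i, Finset.mem_univ i, hj⟩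
    rw [hac i]
    rw [show (∑ j ∈ s, A i j ^ p ^ l * w j) = ∑ j ∈ sc i, A i j ^ p ^ l * w j from
      (Finset.sum_subset hsub fun j _ hj => by simp [hA_def, hj, zero_pow hq0]).symm]
    exact Finset.sum_congr rfl fun j hj => by simp [hA_def, hj]
  have hrel : ∀ j ∈ s, (∑ i, b i * A i j) = 0 := by
    apply hindep s fun j => ∑ i, b i * A i j
    calc ∑ j ∈ s, (∑ i, b i * A i j) ^ p ^ l * w j
        = ∑ j ∈ s, (∑ i, b i ^ p ^ l * A i j ^ p ^ l) * w j := by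
          refine Finset.sum_congr rfl fun j _ => ?_
          rw [sum_pow_charpow p l]
          simp [mul_pow]
      _ = ∑ j ∈ s, ∑ i, b i ^ p ^ l * (A i j ^ p ^ l * w j) := by
          refine Finset.sum_congr rfl fun j _ => ?_
          rw [Finset.sum_mul]
          exact Finset.sum_congr rfl fun i _ => by ring
      _ = ∑ i, b i ^ p ^ l * (∑ j ∈ s, A i j ^ p ^ l * w j) := by
          rw [Finset.sum_comm]
          exact Finset.sum_congr rfl fun i _ => by rw [Finset.mul_sum]
      _ = ∑ i, b i ^ p ^ l * c i := by
          exact Finset.sum_congr rfl fun i _ => by rw [← hA]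
      _ = 0 := hc
  have hAr : ∀ j : J, ∃ dj : Fin r → T, j ∈ s → ∀ i, (∑ s', dj s' * v s' i) = A i j := by
    intro j
    by_cases hj : j ∈ s
    · obtain ⟨dj, hdj⟩ := hker (fun i => A i j) (hrel j hj)
      exact ⟨dj, fun _ => hdj⟩
    · exact ⟨0, fun h => absurd h hj⟩
  choose D hD using hAr
  refine ⟨fun s' => ∑ j ∈ s, D j s' ^ p ^ l * w j, fun i => ?_⟩
  calc (∑ s', (∑ j ∈ s, D j s' ^ p ^ l * w j) * v s' i ^ p ^ l)
      = ∑ s', ∑ j ∈ s, (D j s' * v s' i) ^ p ^ l * w j := by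
        refine Finset.sum_congr rfl fun s' _ => ?_
        rw [Finset.sum_mul]
        exact Finset.sum_congr rfl fun j _ => by rw [mul_pow]; ring
    _ = ∑ j ∈ s, (∑ s', D j s' * v s' i) ^ p ^ l * w j := by
        rw [Finset.sum_comm]
        refine Finset.sum_congr rfl fun j _ => ?_
        rw [sum_pow_charpow p l, Finset.sum_mul]
    _ = ∑ j ∈ s, A i j ^ p ^ l * w j := by
        refine Finset.sum_congr rfl fun j hj => by rw [hD j hj i]
    _ = c i := (hA i).symm

section PC
variable (T : Type*) [CommRing T] (p : ℕ) [Fact p.Prime] [CharP T p]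

lemma mk_raise (n t : ℕ) (x : T) :
    PerfectClosure.mk T p (n, x) = PerfectClosure.mk T p (n + t, x ^ p ^ t) := by
  induction t with
  | zero => simp
  | succ t ih =>
    rw [ih, show x ^ p ^ (t + 1) = (x ^ p ^ t) ^ p by rw [← pow_mul, ← pow_succ],
      show n + (t + 1) = (n + t) + 1 from rfl, PerfectClosure.mk_succ_pow]

lemma mk_add_same (n : ℕ) (x y : T) :
    PerfectClosure.mk T p (n, x) + PerfectClosure.mk T p (n, y)
      = PerfectClosure.mk T p (n, x + y) := by
  rw [PerfectClosure.mk_add_mk, mk_raise T p n n (x + y)]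
  congr 1
  simp [iterate_frobenius, add_pow_char_pow]

lemma mk_sum {ι : Type*} (t : Finset ι) (n : ℕ) (f : ι → T) :
    (∑ i ∈ t, PerfectClosure.mk T p (n, f i)) = PerfectClosure.mk T p (n, ∑ i ∈ t, f i) := by
  classical
  induction t using Finset.induction_on with
  | empty => simp [PerfectClosure.mk_zero_right]
  | insert a t' h ih => rw [Finset.sum_insert h, Finset.sum_insert h, ih, mk_add_same]

lemma mk_eq_zero_iff [IsDomain T] (n : ℕ) (x : T) :
    PerfectClosure.mk T p (n, x) = 0 ↔ x = 0 := by
  rw [← PerfectClosure.mk_zero_right T p n, PerfectClosure.eq_iff]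
  constructor
  · intro h
    have h0 : (frobenius T p)^[n] (0 : T) = 0 := by
      simp [iterate_frobenius]
    rw [h0, iterate_frobenius] at h
    exact pow_eq_zero_iff (pow_ne_zero n (Nat.Prime.ne_zero Fact.out)) |>.mp h
  · rintro rfl; rfl

lemma exists_common_level {m : ℕ} (G : Fin m → PerfectClosure T p) :
    ∃ (n : ℕ) (b : Fin m → T), ∀ i, G i = PerfectClosure.mk T p (n, b i) := by
  choose x hx using fun i => PerfectClosure.mk_surjective (K := T) (p := p) (G i)
  classical
  refine ⟨Finset.univ.sup (fun i => (x i).1), fun i =>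
    (x i).2 ^ p ^ (Finset.univ.sup (fun i => (x i).1) - (x i).1), fun i => ?_⟩
  rw [← hx i, show x i = ((x i).1, (x i).2) from rfl, mk_raise T p (x i).1
    (Finset.univ.sup (fun i => (x i).1) - (x i).1)]
  congr 2
  have : (x i).1 ≤ Finset.univ.sup (fun i => (x i).1) :=
    Finset.le_sup (f := fun i => (x i).1) (Finset.mem_univ i)
  omega

end PC
section COH

variable {T : Type u} [CommRing T] [IsDomain T] [IsNoetherianRing T]
  (p : ℕ) [Fact p.Prime] [CharP T p]

lemma isCoherentRing_perfectClosure (hB : ∀ l : ℕ, HasFrobBasis T (p ^ l)) :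
    IsCoherentRing (PerfectClosure T p) := by
  classical
  apply isCoherent_aux
  intro m G
  obtain ⟨n, b, hb⟩ := exists_common_level T p G
  -- generators of the syzygies of b over T
  obtain ⟨r, v, hv⟩ := Submodule.fg_iff_exists_fin_generating_family.mp
    (IsNoetherian.noetherian (LinearMap.ker (dotL b)))
  have hker : ∀ c : Fin m → T, (∑ i, b i * c i) = 0 →
      ∃ d : Fin r → T, ∀ i, (∑ s, d s * v s i) = c i := by
    intro c hc
    have : c ∈ LinearMap.ker (dotL b) := by rw [LinearMap.mem_ker, dotL_apply]; simpa [mul_comm] using hc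
    rw [← hv, Submodule.mem_span_range_iff_exists_fun] at this
    obtain ⟨d, hd⟩ := this
    refine ⟨d, fun i => ?_⟩
    have := congrFun hd i
    simpa [Finset.sum_apply] using this
  have hvker : ∀ s, (∑ i, b i * v s i) = 0 := by
    intro s
    have : v s ∈ LinearMap.ker (dotL b) := by rw [← hv]; exact Submodule.subset_span ⟨s, rfl⟩
    rw [LinearMap.mem_ker, dotL_apply] at this
    simpa [mul_comm] using this
  set W : Fin r → (Fin m → PerfectClosure T p) :=
    fun s i => PerfectClosure.mk T p (n, v s i) with hW
  have key : LinearMap.ker (dotL G) = Submodule.span (PerfectClosure T p) (Set.range W) := by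
    apply le_antisymm
    · intro c hc
      rw [LinearMap.mem_ker, dotL_apply] at hc
      obtain ⟨l, c', hc'⟩ := exists_common_level T p c
      -- compute the relation in T
      have hrel : (∑ i, b i ^ p ^ l * (c' i ^ p ^ n)) = 0 := by
        have : (∑ i, c i * G i) = PerfectClosure.mk T p (l + n,
            ∑ i, c' i ^ p ^ n * b i ^ p ^ l) := by
          rw [← mk_sum]
          refine Finset.sum_congr rfl fun i _ => ?_
          rw [hc' i, hb i, PerfectClosure.mk_mul_mk]
          simp [iterate_frobenius]
        rw [this, mk_eq_zero_iff] at hc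
        rw [← hc]
        exact Finset.sum_congr rfl fun i _ => by ring
      obtain ⟨d, hd⟩ := syzygy p l (hB l) b v hker (fun i => c' i ^ p ^ n) hrel
      rw [Submodule.mem_span_range_iff_exists_fun]
      refine ⟨fun s => PerfectClosure.mk T p (n + l, d s), funext fun i => ?_⟩
      rw [Finset.sum_apply]
      have step : ∀ s : Fin r, (PerfectClosure.mk T p (n + l, d s) • W s) i
          = PerfectClosure.mk T p ((n + l) + n, d s ^ p ^ n * v s i ^ p ^ (n + l)) := by
        intro s
        rw [Pi.smul_apply, smul_eq_mul, hW, PerfectClosure.mk_mul_mk]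
        simp [iterate_frobenius]
      rw [Finset.sum_congr rfl fun s _ => step s, mk_sum, hc' i, mk_raise T p l (2 * n)]
      congr 1
      refine Prod.ext (by omega) ?_
      show (∑ s, d s ^ p ^ n * v s i ^ p ^ (n + l)) = c' i ^ p ^ (2 * n)
      calc (∑ s, d s ^ p ^ n * v s i ^ p ^ (n + l))
          = ∑ s, (d s * v s i ^ p ^ l) ^ p ^ n := by
            refine Finset.sum_congr rfl fun s _ => ?_
            rw [mul_pow, ← pow_mul, ← pow_add]
            ring_nf
        _ = (∑ s, d s * v s i ^ p ^ l) ^ p ^ n := (sum_pow_charpow p n _ _).symm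
        _ = (c' i ^ p ^ n) ^ p ^ n := by rw [hd i]
        _ = c' i ^ p ^ (2 * n) := by rw [← pow_mul, ← pow_add]; ring_nf
    · rw [Submodule.span_le]
      rintro _ ⟨s, rfl⟩
      rw [SetLike.mem_coe, LinearMap.mem_ker, dotL_apply]
      have : (∑ i, W s i * G i) = PerfectClosure.mk T p (n + n,
          ∑ i, v s i ^ p ^ n * b i ^ p ^ n) := by
        rw [← mk_sum]
        refine Finset.sum_congr rfl fun i _ => ?_
        rw [hW, hb i, PerfectClosure.mk_mul_mk]
        simp [iterate_frobenius]
      rw [this, mk_eq_zero_iff]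
      calc (∑ i, v s i ^ p ^ n * b i ^ p ^ n)
          = (∑ i, b i * v s i) ^ p ^ n := by
            rw [sum_pow_charpow p n]
            exact Finset.sum_congr rfl fun i _ => by rw [mul_pow]; ring
        _ = 0 := by rw [hvker s]; exact zero_pow (pow_ne_zero n (Nat.Prime.ne_zero Fact.out))
  rw [key]
  exact Submodule.fg_span (Set.finite_range _)

end COH


section CoeffPow
variable {k : Type*} [CommRing k] {σ : Type*} (p l : ℕ) [Fact p.Prime] [CharP k p]

lemma smul_finsupp_inj {μ ν : σ →₀ ℕ} (hq : p ^ l ≠ 0) (h : p ^ l • μ = p ^ l • ν) : μ = ν := by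
  ext i
  have := congrArg (fun f : σ →₀ ℕ => f i) h
  simp only [Finsupp.smul_apply, smul_eq_mul] at this
  exact Nat.eq_of_mul_eq_mul_left (Nat.pos_of_ne_zero hq) this

lemma coeff_pow_charpow (f : MvPolynomial σ k) (ν : σ →₀ ℕ) :
    coeff (p ^ l • ν) (f ^ p ^ l) = (coeff ν f) ^ p ^ l := by
  classical
  have hq : p ^ l ≠ 0 := pow_ne_zero _ (Nat.Prime.ne_zero Fact.out)
  induction f using MvPolynomial.induction_on' with
  | monomial μ c =>
    rw [monomial_pow, coeff_monomial, coeff_monomial]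
    by_cases h : μ = ν
    · subst h; rw [if_pos rfl, if_pos rfl]
    · rw [if_neg (fun hc => h (smul_finsupp_inj p l hq hc)), if_neg h, zero_pow hq]
  | add f g hf hg =>
    rw [add_pow_char_pow, coeff_add, coeff_add, add_pow_char_pow, hf, hg]

lemma coeff_pow_charpow_eq_zero (f : MvPolynomial σ k) (ν : σ →₀ ℕ) (i : σ)
    (hν : ¬ p ^ l ∣ ν i) : coeff ν (f ^ p ^ l) = 0 := by
  classical
  induction f using MvPolynomial.induction_on' with
  | monomial μ c =>
    rw [monomial_pow, coeff_monomial]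
    rw [if_neg]
    intro h
    apply hν
    rw [← h]
    simp only [Finsupp.smul_apply, smul_eq_mul]
    exact Dvd.intro _ rfl
  | add f g hf hg =>
    rw [add_pow_char_pow, coeff_add, hf, hg, add_zero]

end CoeffPow

lemma hasFrobBasis_mvPolynomial (k : Type u) [Field k] (p l : ℕ) [Fact p.Prime] [CharP k p]
    (σ : Type) [Fintype σ] : HasFrobBasis (MvPolynomial σ k) (p ^ l) := by
  classical
  have hq0 : p ^ l ≠ 0 := pow_ne_zero _ (Nat.Prime.ne_zero Fact.out)
  have hqpos : 0 < p ^ l := Nat.pos_of_ne_zero hq0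
  set kq : Subfield k := (iterateFrobenius k p l).fieldRange with hkq
  set B := Module.Basis.ofVectorSpace kq k with hBdef
  have hmem : ∀ γ : k, γ ∈ kq ↔ ∃ g : k, g ^ p ^ l = γ := by
    intro γ
    simp [hkq, RingHom.mem_fieldRange, iterateFrobenius_def, eq_comm]
  have hBself : ∀ j, B j = (j : k) := fun j => Module.Basis.ofVectorSpace_apply_self kq k j
  have hsum_repr : ∀ x : k, ∑ j ∈ (B.repr x).support, (B.repr x j : k) * (j : k) = x := by
    intro x
    have h := B.linearCombination_repr x
    rw [Finsupp.linearCombination_apply, Finsupp.sum] at h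
    calc ∑ j ∈ (B.repr x).support, (B.repr x j : k) * (j : k)
        = ∑ j ∈ (B.repr x).support, B.repr x j • B j :=
          Finset.sum_congr rfl fun j _ => by rw [hBself]; rfl
      _ = x := h
  set μfn : (σ → Fin (p ^ l)) → (σ →₀ ℕ) :=
    fun m0 => Finsupp.equivFunOnFinite.symm (fun i => (m0 i : ℕ)) with hμfn
  refine ⟨(Module.Basis.ofVectorSpaceIndex kq k) × (σ → Fin (p ^ l)),
    fun jm => MvPolynomial.monomial (μfn jm.2) (jm.1 : k), ?_, ?_⟩
  · -- span
    intro t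
    induction t using MvPolynomial.induction_on' with
    | monomial μ c =>
      set μ1 : σ →₀ ℕ := μ.mapRange (· / p ^ l) (Nat.zero_div _) with hμ1
      set m0 : σ → Fin (p ^ l) := fun i => ⟨μ i % p ^ l, Nat.mod_lt _ hqpos⟩ with hm0
      have hdec : p ^ l • μ1 + μfn m0 = μ := by
        ext i
        simp only [Finsupp.add_apply, Finsupp.smul_apply, smul_eq_mul, hμ1,
          Finsupp.mapRange_apply, hμfn, Finsupp.coe_equivFunOnFinite_symm, hm0]
        exact Nat.div_add_mod (μ i) (p ^ l)
      choose g hg using fun j : (Module.Basis.ofVectorSpaceIndex kq k) =>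
        (hmem (B.repr c j : k)).mp (B.repr c j).2
      set a : (Module.Basis.ofVectorSpaceIndex kq k) × (σ → Fin (p ^ l)) → MvPolynomial σ k :=
        fun jm => if jm.1 ∈ (B.repr c).support ∧ jm.2 = m0
          then MvPolynomial.C (g jm.1) * MvPolynomial.monomial μ1 1 else 0 with ha
      refine ⟨(B.repr c).support.image (fun j => (j, m0)), a, ?_⟩
      have hterm : ∀ j ∈ (B.repr c).support,
          a (j, m0) ^ p ^ l * MvPolynomial.monomial (μfn m0) (j : k)
            = MvPolynomial.monomial μ (g j ^ p ^ l * (j : k)) := by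
        intro j hj
        rw [ha]
        simp only [hj, and_self, if_pos, true_and]
        rw [mul_pow, ← map_pow, MvPolynomial.monomial_pow, one_pow,
          MvPolynomial.C_mul_monomial, mul_one, MvPolynomial.monomial_mul, hdec]
      calc MvPolynomial.monomial μ c
          = MvPolynomial.monomial μ (∑ j ∈ (B.repr c).support, g j ^ p ^ l * (j : k)) := by
            congr 1
            rw [Finset.sum_congr rfl fun j _ => by rw [hg j], hsum_repr]
        _ = ∑ j ∈ (B.repr c).support, MvPolynomial.monomial μ (g j ^ p ^ l * (j : k)) :=
            map_sum (MvPolynomial.monomial μ) _ _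
        _ = ∑ j ∈ (B.repr c).support,
              a (j, m0) ^ p ^ l * MvPolynomial.monomial (μfn m0) (j : k) :=
            (Finset.sum_congr rfl hterm).symm
        _ = ∑ jm ∈ (B.repr c).support.image (fun j => (j, m0)),
              a jm ^ p ^ l * MvPolynomial.monomial (μfn jm.2) (jm.1 : k) := by
            have hinj : ∀ x ∈ (B.repr c).support, ∀ y ∈ (B.repr c).support,
                (fun j => (j, m0)) x = (fun j => (j, m0)) y → x = y := by
              intro x _ y _ hab
              simpa using hab
            rw [Finset.sum_image hinj]
    | add f1 f2 ih1 ih2 =>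
      obtain ⟨s1, a1, e1⟩ := ih1
      obtain ⟨s2, a2, e2⟩ := ih2
      refine ⟨s1 ∪ s2,
        fun j => (if j ∈ s1 then a1 j else 0) + (if j ∈ s2 then a2 j else 0), ?_⟩
      calc f1 + f2 = (∑ j ∈ s1 ∪ s2, (if j ∈ s1 then a1 j else 0) ^ p ^ l *
            MvPolynomial.monomial (μfn j.2) (j.1 : k))
          + (∑ j ∈ s1 ∪ s2, (if j ∈ s2 then a2 j else 0) ^ p ^ l *
            MvPolynomial.monomial (μfn j.2) (j.1 : k)) := by
            rw [← Finset.sum_subset Finset.subset_union_left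
              (fun j _ hj => by rw [if_neg hj, zero_pow hq0, zero_mul]),
              ← Finset.sum_subset Finset.subset_union_right
              (fun j _ hj => by rw [if_neg hj, zero_pow hq0, zero_mul])]
            rw [Finset.sum_congr rfl (fun j hj => by rw [if_pos hj]),
              Finset.sum_congr (rfl : s2 = s2) (fun j hj => by rw [if_pos hj]),
              ← e1, ← e2]
        _ = _ := by
            rw [← Finset.sum_add_distrib]
            exact Finset.sum_congr rfl fun j _ => by rw [add_pow_char_pow, add_mul]
  · -- independence
    rintro s a h ⟨β0, m0⟩ hjm0
    apply MvPolynomial.ext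
    intro ν
    rw [MvPolynomial.coeff_zero]
    set target := p ^ l • ν + μfn m0 with htarget
    have h0 := congrArg (MvPolynomial.coeff target) h
    rw [MvPolynomial.coeff_zero, MvPolynomial.coeff_sum] at h0
    have hterm : ∀ jm ∈ s, MvPolynomial.coeff target
        (a jm ^ p ^ l * MvPolynomial.monomial (μfn jm.2) (jm.1 : k))
        = if jm.2 = m0 then (MvPolynomial.coeff ν (a jm)) ^ p ^ l * (jm.1 : k) else 0 := by
      intro jm _
      rw [MvPolynomial.coeff_mul_monomial']
      by_cases hm : jm.2 = m0
      · rw [if_pos hm, hm, if_pos le_add_self, add_tsub_cancel_right, coeff_pow_charpow]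
      · rw [if_neg hm]
        by_cases hle : μfn jm.2 ≤ target
        · rw [if_pos hle]
          have hex : ∃ i, (jm.2 i : ℕ) ≠ (m0 i : ℕ) := by
            by_contra hno
            push_neg at hno
            exact hm (funext fun i => Fin.ext (hno i))
          obtain ⟨i, hi⟩ := hex
          rw [coeff_pow_charpow_eq_zero p l _ _ i, zero_mul]
          have hlei : (μfn jm.2) i ≤ target i := hle i
          have htargeti : target i = p ^ l * ν i + (m0 i : ℕ) := by
            simp [htarget, hμfn, Finsupp.coe_equivFunOnFinite_symm, mul_comm]
          have hμi : (μfn jm.2) i = (jm.2 i : ℕ) := by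
            simp [hμfn, Finsupp.coe_equivFunOnFinite_symm]
          have hsubi : (target - μfn jm.2) i = p ^ l * ν i + (m0 i : ℕ) - (jm.2 i : ℕ) := by
            rw [Finsupp.tsub_apply, htargeti, hμi]
          rw [hsubi]
          rw [htargeti, hμi] at hlei
          rintro ⟨e, he⟩
          have hM : (jm.2 i : ℕ) < p ^ l := (jm.2 i).isLt
          have hM0 : (m0 i : ℕ) < p ^ l := (m0 i).isLt
          rcases le_or_gt (jm.2 i : ℕ) (m0 i : ℕ) with hc | hc
          · have h1 : p ^ l * ν i + (m0 i : ℕ) - (jm.2 i : ℕ)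
                = p ^ l * ν i + ((m0 i : ℕ) - (jm.2 i : ℕ)) := by omega
            rw [h1] at he
            have hdvd : p ^ l ∣ ((m0 i : ℕ) - (jm.2 i : ℕ)) :=
              (Nat.dvd_add_right (dvd_mul_right (p ^ l) (ν i))).mp
                (he ▸ dvd_mul_right (p ^ l) e)
            have hz := Nat.eq_zero_of_dvd_of_lt hdvd
            by_cases h00 : (m0 i : ℕ) - (jm.2 i : ℕ) = 0
            · omega
            · exact absurd (hz (by omega)) h00
          · have h1 : p ^ l * ν i = p ^ l * e + ((jm.2 i : ℕ) - (m0 i : ℕ)) := by omega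
            have hdvd : p ^ l ∣ ((jm.2 i : ℕ) - (m0 i : ℕ)) :=
              (Nat.dvd_add_right (dvd_mul_right (p ^ l) e)).mp
                (h1 ▸ dvd_mul_right (p ^ l) (ν i))
            have hz := Nat.eq_zero_of_dvd_of_lt hdvd (by omega)
            omega
        · rw [if_neg hle]
    rw [Finset.sum_congr rfl hterm, ← Finset.sum_filter] at h0
    set sf := s.filter (fun jm => jm.2 = m0) with hsf
    have hsum_img : ∑ β ∈ sf.image Prod.fst,
        (MvPolynomial.coeff ν (a (β, m0))) ^ p ^ l * (β : k) = 0 := by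
      rw [Finset.sum_image ?_]
      · rw [← h0]
        refine Finset.sum_congr rfl fun jm hjm => ?_
        have h2 : jm.2 = m0 := by
          have := (Finset.mem_filter.mp hjm).2
          simpa using this
        rw [show ((jm.1 : (Module.Basis.ofVectorSpaceIndex kq k)), m0) = jm by rw [← h2]]
      · intro x hx y hy hxy
        have hx2 : x.2 = m0 := by simpa using (Finset.mem_filter.mp hx).2
        have hy2 : y.2 = m0 := by simpa using (Finset.mem_filter.mp hy).2
        exact Prod.ext hxy (hx2.trans hy2.symm)
    have hLI := B.linearIndependent
    rw [linearIndependent_iff'] at hLI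
    set gk : (Module.Basis.ofVectorSpaceIndex kq k) → kq :=
      fun β => (⟨(MvPolynomial.coeff ν (a (β, m0))) ^ p ^ l,
        (hmem _).mpr ⟨MvPolynomial.coeff ν (a (β, m0)), rfl⟩⟩ : kq) with hgk
    have hzero : ∑ β ∈ sf.image Prod.fst, gk β • B β = 0 := by
      rw [← hsum_img]
      exact Finset.sum_congr rfl fun β _ => by rw [hBself]; rfl
    have hmemimg : β0 ∈ sf.image Prod.fst :=
      Finset.mem_image.mpr ⟨(β0, m0), Finset.mem_filter.mpr ⟨hjm0, by simp⟩, rfl⟩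
    have hg0 := hLI _ gk hzero β0 hmemimg
    have hval : ((MvPolynomial.coeff ν (a (β0, m0))) ^ p ^ l : k) = 0 :=
      congrArg Subtype.val hg0
    exact pow_eq_zero_iff hq0 |>.mp hval

/-- Let `k` be a field of characteristic `2` and let
`R = k[x⁴, x³y, xy³, y⁴] ⊆ k[x,y]`.  Then `k[x⁴,y⁴] ⊆ R ⊆ k[x,y]` and both inclusions are
purely inseparable; hence `R` has the same perfect closure as `k[x,y]` and is `F`-coherent. -/
theorem fCoherent_of_semigroup_ring_char_two
    (k : Type*) [Field k] [CharP k 2] :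
    let x : MvPolynomial (Fin 2) k := X 0
    let y : MvPolynomial (Fin 2) k := X 1
    let R : Subalgebra k (MvPolynomial (Fin 2) k) :=
      Algebra.adjoin k {x ^ 4, x ^ 3 * y, x * y ^ 3, y ^ 4}
    let A : Subalgebra k (MvPolynomial (Fin 2) k) :=
      Algebra.adjoin k {x ^ 4, y ^ 4}
    A ≤ R ∧
    (∀ f ∈ R, ∃ e : ℕ, f ^ 2 ^ e ∈ A) ∧
    (∀ f : MvPolynomial (Fin 2) k, ∃ e : ℕ, f ^ 2 ^ e ∈ R) ∧
    Nonempty (PerfectClosure (↥R) 2 ≃+* PerfectClosure (MvPolynomial (Fin 2) k) 2) ∧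
    IsCoherentRing (PerfectClosure (↥R) 2) := by
  haveI : Fact (Nat.Prime 2) := ⟨Nat.prime_two⟩
  intro x y R A
  have hxy : x = X 0 ∧ y = X 1 := ⟨rfl, rfl⟩
  obtain ⟨hx, hy⟩ := hxy
  -- membership of generators
  have hg1 : x ^ 4 ∈ ({x ^ 4, x ^ 3 * y, x * y ^ 3, y ^ 4} : Set (MvPolynomial (Fin 2) k)) :=
    Set.mem_insert _ _
  have hg2 : x ^ 3 * y ∈ ({x ^ 4, x ^ 3 * y, x * y ^ 3, y ^ 4} : Set (MvPolynomial (Fin 2) k)) :=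
    Set.mem_insert_iff.mpr (Or.inr (Set.mem_insert _ _))
  have hg3 : x * y ^ 3 ∈ ({x ^ 4, x ^ 3 * y, x * y ^ 3, y ^ 4} : Set (MvPolynomial (Fin 2) k)) :=
    Set.mem_insert_iff.mpr (Or.inr (Set.mem_insert_iff.mpr (Or.inr (Set.mem_insert _ _))))
  have hg4 : y ^ 4 ∈ ({x ^ 4, x ^ 3 * y, x * y ^ 3, y ^ 4} : Set (MvPolynomial (Fin 2) k)) :=
    Set.mem_insert_iff.mpr (Or.inr (Set.mem_insert_iff.mpr (Or.inr
      (Set.mem_insert_iff.mpr (Or.inr rfl)))))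
  have hga : x ^ 4 ∈ ({x ^ 4, y ^ 4} : Set (MvPolynomial (Fin 2) k)) := Set.mem_insert _ _
  have hgb : y ^ 4 ∈ ({x ^ 4, y ^ 4} : Set (MvPolynomial (Fin 2) k)) :=
    Set.mem_insert_iff.mpr (Or.inr rfl)
  -- (1) A ≤ R
  have hAR : A ≤ R := by
    apply Algebra.adjoin_mono
    intro z hz
    rcases hz with h | h
    · exact h ▸ hg1
    · exact h ▸ hg4
  -- (2) fourth powers of R lie in A
  have key2 : ∀ f ∈ R, f ^ 2 ^ 2 ∈ A := by
    intro f hf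
    refine Algebra.adjoin_induction ?_ ?_ ?_ ?_ hf
    · intro z hz
      rcases hz with h | h | h | h
      · subst h; exact pow_mem (Algebra.subset_adjoin hga) _
      · subst h
        have he : (x ^ 3 * y) ^ 2 ^ 2 = (x ^ 4) ^ 3 * y ^ 4 := by ring
        rw [he]
        exact mul_mem (pow_mem (Algebra.subset_adjoin hga) _) (Algebra.subset_adjoin hgb)
      · subst h
        have he : (x * y ^ 3) ^ 2 ^ 2 = x ^ 4 * (y ^ 4) ^ 3 := by ring
        rw [he]
        exact mul_mem (Algebra.subset_adjoin hga) (pow_mem (Algebra.subset_adjoin hgb) _)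
      · subst h; exact pow_mem (Algebra.subset_adjoin hgb) _
    · intro r
      rw [← map_pow]
      exact Subalgebra.algebraMap_mem A _
    · intro f1 f2 _ _ h1 h2
      rw [add_pow_char_pow]
      exact add_mem h1 h2
    · intro f1 f2 _ _ h1 h2
      rw [mul_pow]
      exact mul_mem h1 h2
  -- (3) fourth powers of everything lie in R
  have key3 : ∀ f : MvPolynomial (Fin 2) k, f ^ 2 ^ 2 ∈ R := by
    intro f
    induction f using MvPolynomial.induction_on with
    | C a =>
      rw [← map_pow, ← MvPolynomial.algebraMap_eq]
      exact Subalgebra.algebraMap_mem R _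
    | add f1 f2 h1 h2 =>
      rw [add_pow_char_pow]
      exact add_mem h1 h2
    | mul_X f1 i h1 =>
      rw [mul_pow]
      refine mul_mem h1 ?_
      fin_cases i
      · show (X 0 : MvPolynomial (Fin 2) k) ^ 2 ^ 2 ∈ R
        have he : (X 0 : MvPolynomial (Fin 2) k) ^ 2 ^ 2 = x ^ 4 := by rw [hx]; norm_num
        rw [he]
        exact Algebra.subset_adjoin hg1
      · show (X 1 : MvPolynomial (Fin 2) k) ^ 2 ^ 2 ∈ R
        have he : (X 1 : MvPolynomial (Fin 2) k) ^ 2 ^ 2 = y ^ 4 := by rw [hy]; norm_num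
        rw [he]
        exact Algebra.subset_adjoin hg4
  -- the inclusion ring hom
  let ι : (↥R) →+* MvPolynomial (Fin 2) k := (Subalgebra.val R).toRingHom
  haveI hrad : IsPRadical ι 2 := by
    constructor
    · intro f
      exact ⟨2, ⟨f ^ 2 ^ 2, key3 f⟩, rfl⟩
    · intro z hz
      have hz0 : z = 0 := Subtype.ext hz
      rw [hz0]
      exact zero_mem _
  haveI : IsPRadical ((PerfectClosure.of (MvPolynomial (Fin 2) k) 2).comp ι) 2 :=
    IsPRadical.trans ι (PerfectClosure.of (MvPolynomial (Fin 2) k) 2) 2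
  let e : PerfectClosure (↥R) 2 ≃+* PerfectClosure (MvPolynomial (Fin 2) k) 2 :=
    IsPerfectClosure.equiv (PerfectClosure.of (↥R) 2)
      ((PerfectClosure.of (MvPolynomial (Fin 2) k) 2).comp ι) 2
  refine ⟨hAR, fun f hf => ⟨2, key2 f hf⟩, fun f => ⟨2, key3 f⟩, ⟨e⟩, ?_⟩
  exact isCoherentRing_of_ringEquiv e
    (isCoherentRing_perfectClosure 2 (fun l => hasFrobBasis_mvPolynomial k 2 l (Fin 2)))
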